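/- Let A be a symmetric Frobenius algebra with cocenter C(A) = A/[A,A], where [A,A] is the span of commutators. The binary operation a ⋄ b := ∑_{c∈B} a c b c^∨ descends to a well-defined bilinear operation on C(A); i.e., ⟨(aa') ⋄ b⟩ = ⟨(a'a) ⋄ b⟩ and ⟨a ⋄ (bb')⟩ = ⟨a ⋄ (b'b)⟩ for all a, a', b, b' ∈ A. -/

import Mathlib

section Aux
variable {k A : Type*} [Field k] [Ring A] [Algebra k A]
    {ι : Type*} [Fintype ι] [DecidableEq ι]
    (B : Module.Basis ι k A) (tr : A →ₗ[k] k) (d : ι → A)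

lemma stmt7_rep1 (hd : ∀ i j, tr (d i * B j) = if i = j then 1 else 0) :
    ∀ x : A, ∑ i, tr (d i * x) • B i = x := by
  have h : (∑ i, (LinearMap.toSpanSingleton k A (B i)) ∘ₗ (tr ∘ₗ LinearMap.mulLeft k (d i)))
      = (LinearMap.id : A →ₗ[k] A) := by
    apply B.ext
    intro j
    simp [LinearMap.toSpanSingleton_apply, hd, ite_smul]
  intro x
  have := LinearMap.congr_fun h x
  simpa using this

lemma stmt7_rep2 (hnd : ∀ a : A, (∀ b : A, tr (a * b) = 0) → a = 0)
    (hd : ∀ i j, tr (d i * B j) = if i = j then 1 else 0) :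
    ∀ x : A, ∑ i, tr (x * B i) • d i = x := by
  intro x
  set y : A := x - ∑ i, tr (x * B i) • d i with hy
  have hz : ∀ b : A, tr (y * b) = 0 := by
    have h : (tr ∘ₗ LinearMap.mulLeft k y) = 0 := by
      apply B.ext
      intro j
      simp only [LinearMap.comp_apply, LinearMap.mulLeft_apply, LinearMap.zero_apply, hy]
      rw [sub_mul, Finset.sum_mul, map_sub, map_sum]
      simp_rw [smul_mul_assoc, map_smul]
      have : ∀ i, tr (x * B i) • tr (d i * B j)
          = tr (x * B i) • (if i = j then (1:k) else 0) := by
        intro i; rw [hd]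
      rw [Finset.sum_congr rfl fun i _ => this i]
      simp
    intro b
    exact LinearMap.congr_fun h b
  exact (sub_eq_zero.mp (hnd y hz)).symm

lemma stmt7_central (hnd : ∀ a : A, (∀ b : A, tr (a * b) = 0) → a = 0)
    (hd : ∀ i j, tr (d i * B j) = if i = j then 1 else 0) :
    ∀ x z : A, (∑ i, B i * x * d i) * z = z * ∑ i, B i * x * d i := by
  intro x z
  calc (∑ i, B i * x * d i) * z = ∑ i, B i * x * (d i * z) := by
        rw [Finset.sum_mul]; simp [mul_assoc]
    _ = ∑ i, B i * x * (∑ j, tr (d i * z * B j) • d j) := by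
        refine Finset.sum_congr rfl fun i _ => ?_
        rw [stmt7_rep2 B tr d hnd hd (d i * z)]
    _ = ∑ i, ∑ j, tr (d i * (z * B j)) • (B i * x * d j) := by
        refine Finset.sum_congr rfl fun i _ => ?_
        rw [Finset.mul_sum]
        refine Finset.sum_congr rfl fun j _ => ?_
        rw [mul_smul_comm, mul_assoc]
    _ = ∑ j, (∑ i, tr (d i * (z * B j)) • B i) * x * d j := by
        rw [Finset.sum_comm]
        refine Finset.sum_congr rfl fun j _ => ?_
        rw [Finset.sum_mul, Finset.sum_mul]
        refine Finset.sum_congr rfl fun i _ => ?_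
        rw [smul_mul_assoc, smul_mul_assoc]
    _ = ∑ j, z * B j * x * d j := by
        refine Finset.sum_congr rfl fun j _ => ?_
        rw [stmt7_rep1 B tr d hd (z * B j)]
    _ = z * ∑ j, B j * x * d j := by
        rw [Finset.mul_sum]; simp [mul_assoc]

lemma stmt7_swap (hsym : ∀ a b : A, tr (a * b) = tr (b * a))
    (hnd : ∀ a : A, (∀ b : A, tr (a * b) = 0) → a = 0)
    (hd : ∀ i j, tr (d i * B j) = if i = j then 1 else 0) :
    ∀ x y : A, ∑ i, B i * (x * y) * d i = ∑ i, B i * (y * x) * d i := by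
  intro x y
  symm
  calc ∑ i, B i * (y * x) * d i = ∑ i, (B i * y) * x * d i := by
        simp [mul_assoc]
    _ = ∑ i, (∑ j, tr (d j * (B i * y)) • B j) * x * d i := by
        refine Finset.sum_congr rfl fun i _ => ?_
        rw [stmt7_rep1 B tr d hd (B i * y)]
    _ = ∑ i, ∑ j, tr (y * d j * B i) • (B j * x * d i) := by
        refine Finset.sum_congr rfl fun i _ => ?_
        rw [Finset.sum_mul, Finset.sum_mul]
        refine Finset.sum_congr rfl fun j _ => ?_
        rw [smul_mul_assoc, smul_mul_assoc]
        congr 1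
        rw [← mul_assoc, hsym (d j * B i) y, ← mul_assoc]
    _ = ∑ j, B j * x * (∑ i, tr (y * d j * B i) • d i) := by
        rw [Finset.sum_comm]
        refine Finset.sum_congr rfl fun j _ => ?_
        rw [Finset.mul_sum]
        refine Finset.sum_congr rfl fun i _ => ?_
        rw [mul_smul_comm]
    _ = ∑ j, B j * x * (y * d j) := by
        refine Finset.sum_congr rfl fun j _ => ?_
        rw [stmt7_rep2 B tr d hnd hd (y * d j)]
    _ = ∑ j, B j * (x * y) * d j := by simp [mul_assoc]
end Aux


/-- The operation `a ⋄ b = ∑_c a c b c^∨` descends to a well-defined bilinear operation on the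
cocenter `C(A) = A/[A,A]`: `⟨(aa') ⋄ b⟩ = ⟨(a'a) ⋄ b⟩` and `⟨a ⋄ (bb')⟩ = ⟨a ⋄ (b'b)⟩`. -/
theorem stmt7 {k A : Type*} [Field k] [Ring A] [Algebra k A]
    {ι : Type*} [Fintype ι] [DecidableEq ι]
    (B : Module.Basis ι k A)
    (tr : A →ₗ[k] k)
    (hsym : ∀ a b : A, tr (a * b) = tr (b * a))
    (hnd : ∀ a : A, (∀ b : A, tr (a * b) = 0) → a = 0)
    (d : ι → A)
    (hd : ∀ i j, tr (d i * B j) = if i = j then 1 else 0)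
    (diam : A → A → A)
    (hdiam : ∀ a b, diam a b = ∑ i, a * B i * b * d i)
    (J : Submodule k A)
    (hJ : J = Submodule.span k {x : A | ∃ y z : A, x = y * z - z * y})
    (a a' b b' : A) :
    ((Submodule.Quotient.mk (diam (a * a') b) : A ⧸ J)
        = Submodule.Quotient.mk (diam (a' * a) b)) ∧
    ((Submodule.Quotient.mk (diam a (b * b')) : A ⧸ J)
        = Submodule.Quotient.mk (diam a (b' * b))) := by
  have hfac : ∀ u v : A, diam u v = u * ∑ i, B i * v * d i := by
    intro u v
    rw [hdiam, Finset.mul_sum]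
    exact Finset.sum_congr rfl fun i _ => by rw [mul_assoc, mul_assoc, mul_assoc]
  constructor
  · rw [Submodule.Quotient.eq]
    have h1 : diam (a * a') b = a * (a' * ∑ i, B i * b * d i) := by
      rw [hfac, mul_assoc]
    have h2 : diam (a' * a) b = (a' * ∑ i, B i * b * d i) * a := by
      rw [hfac, mul_assoc, ← stmt7_central B tr d hnd hd b a, ← mul_assoc]
    rw [h1, h2, hJ]
    exact Submodule.subset_span ⟨a, a' * ∑ i, B i * b * d i, rfl⟩
  · have : diam a (b * b') = diam a (b' * b) := by
      rw [hfac, hfac, stmt7_swap B tr d hsym hnd hd b b']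
    rw [this]
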